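/- Under the stated setup, the single-term debiased estimator Ψ_L / p(L) is integrable and E[Ψ_L / p(L)] = a. That is, randomizing the discretization level L according to p and dividing the level-L increment by its selection probability yields an unbiased estimator of the limit a = lim_{l→∞} a_l. -/

import Mathlib

open MeasureTheory ProbabilityTheory Filter
open scoped ENNReal

/-- Independence factorizes the expectation of a real scalar times a vector. -/
lemma indep_integral_smul_aux {Ω : Type*} [MeasurableSpace Ω] (P : Measure Ω)
    [IsProbabilityMeasure P] {d : ℕ} {Y : Ω → EuclideanSpace ℝ (Fin d)} {X : Ω → ℝ}
    (hX : Integrable X P) (hY : Integrable Y P)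
    (hXY : Integrable (fun ω => X ω • Y ω) P) (hind : IndepFun X Y P) :
    ∫ ω, X ω • Y ω ∂P = (∫ ω, X ω ∂P) • ∫ ω, Y ω ∂P := by
  refine PiLp.ext fun i => ?_
  have h1 := (EuclideanSpace.proj (𝕜 := ℝ) i).integral_comp_comm hXY
  have h2 := (EuclideanSpace.proj (𝕜 := ℝ) i).integral_comp_comm hY
  have hind' : IndepFun X (fun ω => Y ω i) P :=
    hind.comp measurable_id ((measurable_pi_apply i).comp (WithLp.measurable_ofLp _ _))
  have hYi : Integrable (fun ω => Y ω i) P := by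
    simpa using (EuclideanSpace.proj (𝕜 := ℝ) i).integrable_comp hY
  calc (∫ ω, X ω • Y ω ∂P) i
      = ∫ ω, EuclideanSpace.proj (𝕜 := ℝ) i (X ω • Y ω) ∂P := h1.symm
    _ = ∫ ω, X ω * Y ω i ∂P := rfl
    _ = (∫ ω, X ω ∂P) * ∫ ω, Y ω i ∂P := hind'.integral_mul_eq_mul_integral hX.aestronglyMeasurable hYi.aestronglyMeasurable
    _ = (∫ ω, X ω ∂P) * ∫ ω, EuclideanSpace.proj (𝕜 := ℝ) i (Y ω) ∂P := rfl
    _ = (∫ ω, X ω ∂P) • (∫ ω, Y ω ∂P) i := by rw [h2]; rfl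

/-- Unbiasedness of the single-term debiased estimator `Ψ_L / p(L)`:
randomizing the level `L` with pmf `p` yields an integrable estimator whose
expectation equals the limit `A` of the sequence `a_l`. -/
theorem single_term_estimator_unbiased
    {Ω : Type*} [MeasurableSpace Ω] (P : Measure Ω) [IsProbabilityMeasure P]
    (d : ℕ) (hd : 1 ≤ d)
    (Ψ : ℕ → Ω → EuclideanSpace ℝ (Fin d))
    (hmeas : ∀ l, Measurable (Ψ l))
    (hindep : iIndepFun Ψ P)
    (hL2 : ∀ l, MemLp (Ψ l) 2 P)
    (a : ℕ → EuclideanSpace ℝ (Fin d)) (A : EuclideanSpace ℝ (Fin d))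
    (h0 : ∫ ω, Ψ 0 ω ∂P = a 0)
    (hinc : ∀ l, 1 ≤ l → ∫ ω, Ψ l ω ∂P = a l - a (l - 1))
    (hconv : Tendsto a atTop (nhds A))
    (p : ℕ → ℝ) (hp : ∀ l, 0 < p l) (hpsum : ∑' l, p l = 1)
    (hsum : Summable fun l => (∫ ω, ‖Ψ l ω‖ ^ 2 ∂P) / p l)
    (L : Ω → ℕ) (hLmeas : Measurable L)
    (hLlaw : ∀ l, P {ω | L ω = l} = ENNReal.ofReal (p l))
    (hLindep : IndepFun L (fun ω l => Ψ l ω) P) :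
    Integrable (fun ω => (p (L ω))⁻¹ • Ψ (L ω) ω) P ∧
      ∫ ω, (p (L ω))⁻¹ • Ψ (L ω) ω ∂P = A := by
  classical
  -- the events and indicator functions
  have hSm : ∀ l, MeasurableSet {ω | L ω = l} := fun l => hLmeas (measurableSet_singleton l)
  set I : ℕ → Ω → ℝ := fun l ω => Set.indicator {ω | L ω = l} (fun _ => (1:ℝ)) ω with hI_def
  set f : ℕ → Ω → EuclideanSpace ℝ (Fin d) :=
    fun l ω => Set.indicator {ω | L ω = l} (fun ω => (p l)⁻¹ • Ψ l ω) ω with hf_def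
  -- basic integrability
  have hint : ∀ l, Integrable (Ψ l) P := fun l => (hL2 l).integrable one_le_two
  have hfint : ∀ l, Integrable (f l) P :=
    fun l => ((hint l).smul ((p l)⁻¹)).indicator (hSm l)
  have hIint : ∀ l, Integrable (I l) P :=
    fun l => (integrable_const (1:ℝ)).indicator (hSm l)
  have hIavg : ∀ l, ∫ ω, I l ω ∂P = p l := by
    intro l
    rw [hI_def]
    rw [integral_indicator_const (1:ℝ) (hSm l), measureReal_def, hLlaw l]
    simp [ENNReal.toReal_ofReal (hp l).le]
  -- independence of the indicator and Ψ l (and functions thereof)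
  have hind1 : ∀ l, IndepFun (I l) (Ψ l) P := by
    intro l
    have hφ : Measurable (fun n : ℕ => ({l} : Set ℕ).indicator (fun _ => (1:ℝ)) n) :=
      measurable_of_countable _
    have h := hLindep.comp hφ (measurable_pi_apply l)
    have heq : (fun n : ℕ => ({l} : Set ℕ).indicator (fun _ => (1:ℝ)) n) ∘ L = I l := by
      funext ω; simp [Set.indicator_apply, hI_def]
    rwa [heq] at h
  -- pointwise decomposition of f
  have hf_eq : ∀ l ω, f l ω = I l ω • ((p l)⁻¹ • Ψ l ω) := by
    intro l ω
    by_cases h : L ω = l <;> simp [hf_def, hI_def, Set.indicator_apply, h]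
  -- the expectation of f l equals the expectation of Ψ l
  have hintf : ∀ l, ∫ ω, f l ω ∂P = ∫ ω, Ψ l ω ∂P := by
    intro l
    have hind' : IndepFun (I l) (fun ω => (p l)⁻¹ • Ψ l ω) P :=
      (hind1 l).comp measurable_id (measurable_id.const_smul ((p l)⁻¹))
    have hXY : Integrable (fun ω => I l ω • ((p l)⁻¹ • Ψ l ω)) P := by
      have := hfint l
      rwa [show f l = fun ω => I l ω • ((p l)⁻¹ • Ψ l ω) from funext (hf_eq l)] at this
    calc ∫ ω, f l ω ∂P = ∫ ω, I l ω • ((p l)⁻¹ • Ψ l ω) ∂P := by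
          exact integral_congr_ae (Filter.Eventually.of_forall (hf_eq l))
      _ = (∫ ω, I l ω ∂P) • ∫ ω, (p l)⁻¹ • Ψ l ω ∂P :=
          indep_integral_smul_aux P (hIint l) ((hint l).smul ((p l)⁻¹)) hXY hind'
      _ = p l • ((p l)⁻¹ • ∫ ω, Ψ l ω ∂P) := by rw [hIavg l, integral_smul]
      _ = ∫ ω, Ψ l ω ∂P := by
          rw [smul_smul, mul_inv_cancel₀ (hp l).ne', one_smul]
  -- the expectation of ‖f l‖ equals the expectation of ‖Ψ l‖
  have hnorm : ∀ l, ∫ ω, ‖f l ω‖ ∂P = ∫ ω, ‖Ψ l ω‖ ∂P := by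
    intro l
    have hptw : ∀ ω, ‖f l ω‖ = I l ω * ((p l)⁻¹ * ‖Ψ l ω‖) := by
      intro ω
      by_cases h : L ω = l
      · have hmem : ω ∈ {ω | L ω = l} := h
        simp only [hf_def, hI_def, Set.indicator_of_mem hmem, norm_smul,
          Real.norm_eq_abs, abs_inv, abs_of_pos (hp l), one_mul]
      · have hmem : ω ∉ {ω | L ω = l} := h
        simp [hf_def, hI_def, Set.indicator_of_notMem hmem]
    have hind' : IndepFun (I l) (fun ω => (p l)⁻¹ * ‖Ψ l ω‖) P :=
      (hind1 l).comp measurable_id (measurable_norm.const_mul ((p l)⁻¹))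
    have hYint : Integrable (fun ω => (p l)⁻¹ * ‖Ψ l ω‖) P := (hint l).norm.const_mul _
    calc ∫ ω, ‖f l ω‖ ∂P = ∫ ω, I l ω * ((p l)⁻¹ * ‖Ψ l ω‖) ∂P :=
          integral_congr_ae (Filter.Eventually.of_forall hptw)
      _ = (∫ ω, I l ω ∂P) * ∫ ω, (p l)⁻¹ * ‖Ψ l ω‖ ∂P :=
          hind'.integral_mul_eq_mul_integral (hIint l).aestronglyMeasurable hYint.aestronglyMeasurable
      _ = p l * ((p l)⁻¹ * ∫ ω, ‖Ψ l ω‖ ∂P) := by rw [hIavg l, integral_const_mul]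
      _ = ∫ ω, ‖Ψ l ω‖ ∂P := by
          rw [← mul_assoc, mul_inv_cancel₀ (hp l).ne', one_mul]
  -- summability of the first absolute moments
  have hpos2 : ∀ l, Integrable (fun ω => ‖Ψ l ω‖ ^ 2) P := fun l =>
    (memLp_two_iff_integrable_sq_norm (hL2 l).aestronglyMeasurable).mp (hL2 l)
  have hSp : Summable p := by
    by_contra h
    rw [tsum_eq_zero_of_not_summable h] at hpsum
    norm_num at hpsum
  have hb : ∀ l, ∫ ω, ‖Ψ l ω‖ ∂P ≤ (p l + (∫ ω, ‖Ψ l ω‖ ^ 2 ∂P) / p l) / 2 := by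
    intro l
    have hptw : ∀ ω, ‖Ψ l ω‖ ≤ (p l + ‖Ψ l ω‖ ^ 2 / p l) / 2 := by
      intro ω
      have h1 : 0 < p l := hp l
      have h2 : 0 ≤ (‖Ψ l ω‖ - p l) ^ 2 := sq_nonneg _
      rw [← sub_nonneg]
      have hkey : (p l + ‖Ψ l ω‖ ^ 2 / p l) / 2 - ‖Ψ l ω‖ = (‖Ψ l ω‖ - p l) ^ 2 / (2 * p l) := by
        field_simp; ring
      rw [hkey]
      positivity
    calc ∫ ω, ‖Ψ l ω‖ ∂P ≤ ∫ ω, (p l + ‖Ψ l ω‖ ^ 2 / p l) / 2 ∂P :=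
          integral_mono (hint l).norm
            (((integrable_const (p l)).add ((hpos2 l).div_const _)).div_const _) hptw
      _ = (p l + (∫ ω, ‖Ψ l ω‖ ^ 2 ∂P) / p l) / 2 := by
          rw [integral_div, integral_add (integrable_const _) ((hpos2 l).div_const _),
            integral_const, integral_div]
          simp
  have hSnorm : Summable (fun l => ∫ ω, ‖Ψ l ω‖ ∂P) :=
    Summable.of_nonneg_of_le (fun l => integral_nonneg fun ω => norm_nonneg _) hb
      ((hSp.add hsum).div_const 2)
  -- finiteness of the sum of the lintegrals of the norms
  have hlint : ∀ l, ∫⁻ ω, ‖f l ω‖₊ ∂P = ENNReal.ofReal (∫ ω, ‖Ψ l ω‖ ∂P) := by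
    intro l
    simp only [← enorm_eq_nnnorm]
    rw [← ofReal_integral_norm_eq_lintegral_enorm (hfint l), hnorm l]
  have hfin : ∑' l, ∫⁻ ω, ‖f l ω‖₊ ∂P ≠ ∞ := by
    simp_rw [hlint]
    rw [← ENNReal.ofReal_tsum_of_nonneg
      (fun l => integral_nonneg fun ω => norm_nonneg _) hSnorm]
    exact ENNReal.ofReal_ne_top
  -- the estimator as a pointwise series
  have hX_eq : ∀ ω, (p (L ω))⁻¹ • Ψ (L ω) ω = ∑' l, f l ω := by
    intro ω
    rw [tsum_eq_single (L ω) (fun l hl => by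
      simp only [hf_def]
      exact Set.indicator_of_notMem (by simpa using fun h => hl h.symm) _)]
    simp [hf_def, Set.indicator_apply]
  -- measurability of the estimator
  have hXm : Measurable (fun ω => (p (L ω))⁻¹ • Ψ (L ω) ω) := by
    have hF : Measurable (fun q : Ω × ℕ => (p q.2)⁻¹ • Ψ q.2 q.1) :=
      measurable_from_prod_countable_left fun l =>
        show Measurable fun ω => (p l)⁻¹ • Ψ l ω from (hmeas l).const_smul ((p l)⁻¹)
    exact hF.comp (measurable_id.prodMk hLmeas)
  -- integrability of the estimator
  have hXint : Integrable (fun ω => (p (L ω))⁻¹ • Ψ (L ω) ω) P := by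
    refine ⟨hXm.aestronglyMeasurable, ?_⟩
    have hnn : ∀ ω, (‖(p (L ω))⁻¹ • Ψ (L ω) ω‖₊ : ℝ≥0∞) = ∑' l, (‖f l ω‖₊ : ℝ≥0∞) := by
      intro ω
      rw [tsum_eq_single (L ω) (fun l hl => by
        simp only [hf_def]
        rw [Set.indicator_of_notMem (by simpa using fun h => hl h.symm)]
        simp)]
      simp [hf_def, Set.indicator_apply]
    rw [HasFiniteIntegral]
    calc ∫⁻ ω, ‖(p (L ω))⁻¹ • Ψ (L ω) ω‖₊ ∂P
        = ∫⁻ ω, ∑' l, (‖f l ω‖₊ : ℝ≥0∞) ∂P := by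
          exact lintegral_congr fun ω => hnn ω
      _ = ∑' l, ∫⁻ ω, ‖f l ω‖₊ ∂P :=
          lintegral_tsum fun l => (hfint l).aestronglyMeasurable.enorm
      _ < ∞ := lt_top_iff_ne_top.mpr hfin
  refine ⟨hXint, ?_⟩
  -- compute the expectation
  have hstep : ∫ ω, (p (L ω))⁻¹ • Ψ (L ω) ω ∂P = ∑' l, ∫ ω, Ψ l ω ∂P := by
    rw [show (fun ω => (p (L ω))⁻¹ • Ψ (L ω) ω) = fun ω => ∑' l, f l ω from funext hX_eq]
    rw [integral_tsum (fun l => (hfint l).aestronglyMeasurable) hfin]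
    exact tsum_congr hintf
  rw [hstep]
  -- the telescoping series sums to A
  have hsumE : Summable (fun l => ∫ ω, Ψ l ω ∂P) :=
    Summable.of_norm_bounded hSnorm (fun l => norm_integral_le_integral_norm _)
  have hpart : ∀ n, ∑ l ∈ Finset.range (n + 1), ∫ ω, Ψ l ω ∂P = a n := by
    intro n
    induction n with
    | zero => simpa using h0
    | succ n ih =>
        rw [Finset.sum_range_succ, ih, hinc (n + 1) (by omega)]
        simp
  have h2 := hsumE.hasSum.tendsto_sum_nat
  have h3 : Tendsto (fun n => ∑ l ∈ Finset.range (n + 1), ∫ ω, Ψ l ω ∂P) atTop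
      (nhds (∑' l, ∫ ω, Ψ l ω ∂P)) := h2.comp (tendsto_add_atTop_nat 1)
  rw [funext hpart] at h3
  exact tendsto_nhds_unique h3 hconv
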